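/- Let k be a field equipped with an involution σ, and assume that either σ is not the identity or the characteristic of k is not 2. Let k₀ = {λ ∈ k : σ(λ) = λ} be the fixed field of σ, and let φ : kˣ → k₀ˣ be the group homomorphism given by φ(λ) = λ·σ(λ). Let V be a finite-dimensional k-vector space of dimension at least 2, and let B be a hermitian form on V (with respect to σ). If φ is surjective, then V contains a nonzero isotropic vector, i.e. there exists v ∈ V with v ≠ 0 and B(v,v) = 0. -/

import Mathlib

/-- If the norm map `φ : kˣ → k₀ˣ`, `φ(λ) = λ·σ(λ)`, onto the
units of the fixed field `k₀ = {λ | σ λ = λ}` is surjective, then every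
hermitian form on a space of dimension ≥ 2 has a nonzero isotropic vector.
Surjectivity of `φ` is phrased as: every nonzero element of `k` fixed by `σ`
is of the form `l * σ l`. -/
theorem hermitian_exists_isotropic_of_norm_surjective
    {k V : Type*} [Field k] [AddCommGroup V] [Module k V]
    [FiniteDimensional k V] (hdim : 2 ≤ Module.finrank k V)
    (σ : k →+* k) (hσ : Function.Involutive σ)
    (hkey : (∃ x : k, σ x ≠ x) ∨ (2 : k) ≠ 0)
    (hsurj : ∀ a : k, a ≠ 0 → σ a = a → ∃ l : k, l * σ l = a)
    (B : V →ₗ[k] V →ₛₗ[σ] k)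
    (hherm : ∀ v w : V, σ (B v w) = B w v) :
    ∃ v : V, v ≠ 0 ∧ B v v = 0 := by
  -- pick two independent vectors from a basis
  have hb := Module.finBasis k V
  have h0 : (0 : ℕ) < Module.finrank k V := by omega
  have h1 : (1 : ℕ) < Module.finrank k V := by omega
  set v := hb ⟨0, h0⟩ with hv
  set w := hb ⟨1, h1⟩ with hw
  have hvne : v ≠ 0 := hb.ne_zero _
  have hindep : ∀ c : k, w ≠ c • v := by
    intro c hc
    have hne : (⟨1, h1⟩ : Fin (Module.finrank k V)) ≠ ⟨0, h0⟩ :=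
      Fin.ne_of_val_ne one_ne_zero
    have := congrArg (fun x => (hb.repr x) ⟨1, h1⟩) hc
    simp [hv, hw, Module.Basis.repr_self, Finsupp.single_apply, hne] at this
  by_cases hvv : B v v = 0
  · exact ⟨v, hvne, hvv⟩
  have hsa : σ (B v v) = B v v := hherm v v
  set u := w - (B w v / B v v) • v with hu
  have hune : u ≠ 0 := by
    intro h
    exact hindep (B w v / B v v) (by rw [hu, sub_eq_zero] at h; exact h)
  have huv : B u v = 0 := by
    simp only [hu, map_sub, map_smul, LinearMap.sub_apply, LinearMap.smul_apply,
      smul_eq_mul]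
    field_simp
    ring
  have hvu : B v u = 0 := by rw [← hherm u v, huv, map_zero]
  by_cases huu : B u u = 0
  · exact ⟨u, hune, huu⟩
  have hsb : σ (B u u) = B u u := hherm u u
  have hc0 : -(B u u / B v v) ≠ 0 := by
    simp [div_eq_zero_iff, huu, hvv]
  have hsc : σ (-(B u u / B v v)) = -(B u u / B v v) := by
    rw [map_neg, map_div₀, hsa, hsb]
  obtain ⟨l, hl⟩ := hsurj _ hc0 hsc
  refine ⟨l • v + u, ?_, ?_⟩
  · intro h
    apply hindep (B w v / B v v - l)
    have hlv : -(l • v) = u := by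
      rw [add_eq_zero_iff_eq_neg] at h
      rw [h, neg_neg]
    calc w = (B w v / B v v) • v + u := by rw [hu]; abel
    _ = (B w v / B v v) • v + -(l • v) := by rw [hlv]
    _ = (B w v / B v v - l) • v := by rw [sub_smul]; abel
  · have hexp : B (l • v + u) (l • v + u) = l * σ l * B v v + B u u := by
      simp only [map_add, LinearMap.add_apply, map_smul, LinearMap.smul_apply,
        LinearMap.map_smulₛₗ, smul_eq_mul, huv, hvu]
      ring
    rw [hexp, hl]
    field_simp
    ring
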